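/- arXiv:math/0303043 — 2 statements merged into one kernel-verified Lean document; each statement's English description precedes it below -/
import Mathlib

section
/- Let s and l be positive integers and let p be an odd prime such that p ≥ l+2 and p-1 divides none of ks and ks+1 for k = 1, …, l. Then for every positive integer n, H*({s}^l; pn) satisfies v_p(H*({s}^l; pn)) ≥ 1 if ls is even, and v_p(H*({s}^l; pn)) ≥ 2 if ls is odd. -/
open Finset


lemma zmod_inv_eq {m : ℕ} (a b : ZMod m) (h : a * b = 1) : a⁻¹ = b := by
  have hu : IsUnit a := IsUnit.of_mul_eq_one b h
  have h2 := ZMod.inv_mul_of_unit a hu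
  calc a⁻¹ = a⁻¹ * (a * b) := by rw [h, mul_one]
    _ = (a⁻¹ * a) * b := by ring
    _ = b := by rw [h2, one_mul]

lemma dual_pow {R : Type*} [CommRing R] (π u a : R) (hπ : π^2 = 0) (t : ℕ) :
    (u + a * u^2 * π)^t = u^t + a * t * u^(t+1) * π := by
  induction t with
  | zero => simp
  | succ t ih =>
    rw [pow_succ, ih]
    push_cast
    linear_combination (a^2 * (t:R) * u^(t+3)) * hπ

lemma inv_unit_add {m : ℕ} (π x c : ZMod m) (hπ : π^2 = 0) (hx : IsUnit x) :
    (x + c*π)⁻¹ = x⁻¹ - c * (x⁻¹)^2 * π := by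
  have h1 : x * x⁻¹ = 1 := by rw [mul_comm]; exact ZMod.inv_mul_of_unit x hx
  apply zmod_inv_eq
  linear_combination (1 - c*x⁻¹*π) * h1 - c^2*(x⁻¹)^2 * hπ

lemma inv_add_pow {m : ℕ} (π x c : ZMod m) (hπ : π^2 = 0) (hx : IsUnit x) (t : ℕ) :
    ((x + c*π)⁻¹)^t = (x⁻¹)^t - c * t * (x⁻¹)^(t+1) * π := by
  rw [inv_unit_add π x c hπ hx]
  have := dual_pow π x⁻¹ (-c) hπ t
  calc (x⁻¹ - c * (x⁻¹)^2 * π)^t = (x⁻¹ + (-c) * (x⁻¹)^2 * π)^t := by ring_nf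
    _ = (x⁻¹)^t + (-c) * t * (x⁻¹)^(t+1) * π := this
    _ = (x⁻¹)^t - c * t * (x⁻¹)^(t+1) * π := by ring

lemma inv_neg_zmod {m : ℕ} (x : ZMod m) (hx : IsUnit x) : (-x)⁻¹ = -(x⁻¹) := by
  apply zmod_inv_eq
  have h1 : x * x⁻¹ = 1 := by rw [mul_comm]; exact ZMod.inv_mul_of_unit x hx
  linear_combination h1

lemma unit_of_not_dvd {p : ℕ} (hp : p.Prime) (e : ℕ) {k : ℕ} (hk : ¬ p ∣ k) :
    IsUnit ((k : ZMod (p^e))) := by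
  rw [ZMod.isUnit_iff_coprime]
  exact ((hp.coprime_iff_not_dvd.2 hk).symm.pow_right e)

lemma unit_of_not_dvd' {p : ℕ} (hp : p.Prime) {k : ℕ} (hk : ¬ p ∣ k) :
    IsUnit ((k : ZMod p)) := by
  rw [ZMod.isUnit_iff_coprime]
  exact (hp.coprime_iff_not_dvd.2 hk).symm

lemma casthom_inv {p : ℕ} (hp : p.Prime) {k : ℕ} (hk : ¬ p ∣ k) :
    (ZMod.castHom (dvd_pow_self p two_ne_zero) (ZMod p)) ((k : ZMod (p^2)))⁻¹
      = ((k : ZMod p))⁻¹ := by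
  have hu := unit_of_not_dvd hp 2 hk
  symm
  apply zmod_inv_eq
  have h1 : ((k : ZMod (p^2)) * ((k : ZMod (p^2)))⁻¹) = 1 := by
    rw [mul_comm]; exact ZMod.inv_mul_of_unit _ hu
  calc (k : ZMod p) * (ZMod.castHom (dvd_pow_self p two_ne_zero) (ZMod p)) ((k : ZMod (p^2)))⁻¹
      = (ZMod.castHom (dvd_pow_self p two_ne_zero) (ZMod p))
          ((k : ZMod (p^2)) * ((k : ZMod (p^2)))⁻¹) := by rw [map_mul, map_natCast]
    _ = 1 := by rw [h1, map_one]

lemma exists_of_cast_eq_zero {p : ℕ} (hp : p.Prime) (x : ZMod (p^2))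
    (h : (ZMod.castHom (dvd_pow_self p two_ne_zero) (ZMod p)) x = 0) :
    ∃ y : ZMod (p^2), x = (p : ZMod (p^2)) * y := by
  haveI : NeZero (p^2) := ⟨pow_ne_zero _ hp.ne_zero⟩
  have hx : x = ((x.val : ℕ) : ZMod (p^2)) := by
    rw [ZMod.natCast_val, ZMod.cast_id]
  have h2 : ((x.val : ℕ) : ZMod p) = 0 := by
    rwa [← map_natCast (ZMod.castHom (dvd_pow_self p two_ne_zero) (ZMod p)), ← hx]
  have h3 : p ∣ x.val := (ZMod.natCast_eq_zero_iff _ _).1 h2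
  obtain ⟨c, hc⟩ := h3
  exact ⟨(c : ZMod (p^2)), by rw [hx, hc]; push_cast; ring⟩

lemma pi_sq {p : ℕ} : ((p : ZMod (p^2)))^2 = 0 := by
  rw [← Nat.cast_pow, ZMod.natCast_self]

def Tz (m p t : ℕ) : ZMod m := ∑ r ∈ Finset.Ico 1 p, ((r : ZMod m))⁻¹ ^ t

lemma Tz_p_eq_zero {p : ℕ} (hp : p.Prime) {t : ℕ} (ht : ¬ (p - 1) ∣ t) :
    Tz p p t = 0 := by
  haveI : Fact p.Prime := ⟨hp⟩
  classical
  have h1 : Tz p p t = ∑ x ∈ (univ : Finset (ZMod p)) \ {0}, (x⁻¹)^t := by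
    refine Finset.sum_nbij' (fun r => ((r : ZMod p))) (fun x => x.val) ?_ ?_ ?_ ?_ ?_
    · intro r hr
      simp only [mem_Ico] at hr
      simp only [mem_sdiff, mem_univ, true_and, mem_singleton]
      intro h0
      have := (ZMod.natCast_eq_zero_iff r p).1 h0
      exact absurd (Nat.le_of_dvd (by omega) this) (by omega)
    · intro x hx
      simp only [mem_sdiff, mem_univ, true_and, mem_singleton] at hx
      simp only [mem_Ico]
      constructor
      · rcases Nat.eq_zero_or_pos x.val with h | h
        · exact absurd ((ZMod.val_eq_zero x).1 h) hx
        · omega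
      · exact ZMod.val_lt x
    · intro r hr
      simp only [mem_Ico] at hr
      exact ZMod.val_cast_of_lt hr.2
    · intro x hx
      exact ZMod.natCast_zmod_val x
    · intro r hr; rfl
  have h2 : ∑ x ∈ (univ : Finset (ZMod p)) \ {0}, (x⁻¹)^t
      = ∑ x ∈ (univ : Finset (ZMod p)) \ {0}, x^t := by
    refine Finset.sum_nbij' (fun x => x⁻¹) (fun x => x⁻¹) ?_ ?_ ?_ ?_ ?_
    · intro x hx
      simp only [mem_sdiff, mem_univ, true_and, mem_singleton] at hx ⊢
      exact inv_ne_zero hx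
    · intro x hx
      simp only [mem_sdiff, mem_univ, true_and, mem_singleton] at hx ⊢
      exact inv_ne_zero hx
    · intro x _; exact inv_inv x
    · intro x _; exact inv_inv x
    · intro x _; rfl
  have h3 : ∑ x ∈ (univ : Finset (ZMod p)) \ {0}, x^t = ∑ u : (ZMod p)ˣ, (u : ZMod p)^t := by
    symm
    refine Finset.sum_nbij' (fun u => (u : ZMod p)) (fun x => if h : x = 0 then 1 else Units.mk0 x h) ?_ ?_ ?_ ?_ ?_
    · intro u _
      simp only [mem_sdiff, mem_univ, true_and, mem_singleton]
      exact u.ne_zero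
    · intro x _; exact mem_univ _
    · intro u _
      simp only [Units.ne_zero, dif_neg]
      exact Units.ext rfl
    · intro x hx
      simp only [mem_sdiff, mem_univ, true_and, mem_singleton] at hx
      simp [hx]
    · intro u _; rfl
  rw [h1, h2, h3, FiniteField.sum_pow_units, ZMod.card p]
  exact if_neg ht

lemma cast_Tz {p : ℕ} (hp : p.Prime) (t : ℕ) :
    (ZMod.castHom (dvd_pow_self p two_ne_zero) (ZMod p)) (Tz (p^2) p t) = Tz p p t := by
  rw [Tz, Tz, map_sum]
  refine Finset.sum_congr rfl ?_
  intro r hr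
  simp only [mem_Ico] at hr
  have hk : ¬ p ∣ r := fun hd => absurd (Nat.le_of_dvd (by omega) hd) (by omega)
  rw [map_pow, casthom_inv hp hk]

lemma Tz_factor {p : ℕ} (hp : p.Prime) {t : ℕ} (ht : ¬ (p - 1) ∣ t) :
    ∃ y, Tz (p^2) p t = (p : ZMod (p^2)) * y :=
  exists_of_cast_eq_zero hp _ (by rw [cast_Tz hp t]; exact Tz_p_eq_zero hp ht)

lemma pi_Tz {p : ℕ} (hp : p.Prime) {t : ℕ} (ht : ¬ (p - 1) ∣ t) :
    (p : ZMod (p^2)) * Tz (p^2) p t = 0 := by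
  obtain ⟨y, hy⟩ := Tz_factor hp ht
  rw [hy, ← mul_assoc, ← sq, pi_sq, zero_mul]

lemma Tz_pairing {p : ℕ} (hp : p.Prime) (hodd : Odd p) {t : ℕ} (htodd : Odd t)
    (ht : ¬ (p - 1) ∣ t) (ht1 : ¬ (p - 1) ∣ (t + 1)) :
    Tz (p^2) p t = 0 := by
  set π := (p : ZMod (p^2)) with hπdef
  have hπ : π^2 = 0 := pi_sq
  -- reindex r ↦ p - r
  have hre : Tz (p^2) p t = ∑ r ∈ Ico 1 p, (((p - r : ℕ) : ZMod (p^2)))⁻¹ ^ t := by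
    rw [Tz]
    refine Finset.sum_nbij' (fun r => p - r) (fun r => p - r) ?_ ?_ ?_ ?_ ?_
    · intro r hr; simp only [mem_Ico] at hr ⊢; omega
    · intro r hr; simp only [mem_Ico] at hr ⊢; omega
    · intro r hr; simp only [mem_Ico] at hr; show p - (p - r) = r; omega
    · intro r hr; simp only [mem_Ico] at hr; show p - (p - r) = r; omega
    · intro r hr
      simp only [mem_Ico] at hr
      rw [Nat.sub_sub_self (by omega)]
  -- evaluate each reflected term
  have hterm : ∀ r ∈ Ico 1 p, (((p - r : ℕ) : ZMod (p^2)))⁻¹ ^ t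
      = -(((r : ZMod (p^2)))⁻¹ ^ t) - t * (((r : ZMod (p^2)))⁻¹)^(t+1) * π := by
    intro r hr
    simp only [mem_Ico] at hr
    have hk : ¬ p ∣ r := fun hd => absurd (Nat.le_of_dvd (by omega) hd) (by omega)
    have hu := unit_of_not_dvd hp 2 hk
    set x := ((r : ZMod (p^2))) with hx
    have hcast : ((p - r : ℕ) : ZMod (p^2)) = π - x := by
      rw [Nat.cast_sub (le_of_lt hr.2)]
    have h1 : x * x⁻¹ = 1 := by rw [mul_comm]; exact ZMod.inv_mul_of_unit _ hu
    have hinv : (π - x)⁻¹ = -(x⁻¹ + (x⁻¹)^2 * π) := by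
      apply zmod_inv_eq
      linear_combination (1 + x⁻¹*π) * h1 - (x⁻¹)^2 * hπ
    rw [hcast, hinv, Odd.neg_pow htodd]
    have hd := dual_pow π x⁻¹ 1 hπ t
    rw [one_mul] at hd
    rw [hd]
    ring
  rw [Finset.sum_congr rfl hterm, Finset.sum_sub_distrib, Finset.sum_neg_distrib] at hre
  have hT1 : ∑ r ∈ Ico 1 p, (t : ZMod (p^2)) * (((r : ZMod (p^2)))⁻¹)^(t+1) * π
      = ((t : ZMod (p^2)) * π) * Tz (p^2) p (t+1) := by
    rw [Tz, Finset.mul_sum]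
    refine Finset.sum_congr rfl ?_
    intro r _; ring
  have hTdef : ∑ r ∈ Ico 1 p, ((r : ZMod (p^2)))⁻¹ ^ t = Tz (p^2) p t := rfl
  rw [hT1, hTdef] at hre
  have hπT : ((t : ZMod (p^2)) * π) * Tz (p^2) p (t+1) = 0 := by
    rw [mul_assoc, pi_Tz hp ht1, mul_zero]
  rw [hπT, sub_zero] at hre
  -- now Tz = -Tz
  have h2T : (2 : ZMod (p^2)) * Tz (p^2) p t = 0 := by
    linear_combination hre
  have hu2 : IsUnit (2 : ZMod (p^2)) := by
    have : ((2 : ℕ) : ZMod (p^2)) = (2 : ZMod (p^2)) := by norm_num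
    rw [← this, ZMod.isUnit_iff_coprime]
    have h2p : ¬ (2 ∣ p^2) := by
      intro hd
      have := Nat.Prime.dvd_of_dvd_pow Nat.prime_two hd
      rcases hodd with ⟨j, hj⟩
      omega
    exact (Nat.Prime.coprime_iff_not_dvd Nat.prime_two).2 h2p
  calc Tz (p^2) p t = (2⁻¹ * 2) * Tz (p^2) p t := by
        rw [ZMod.inv_mul_of_unit _ hu2, one_mul]
    _ = 2⁻¹ * ((2 : ZMod (p^2)) * Tz (p^2) p t) := by ring
    _ = 0 := by rw [h2T, mul_zero]

def Ffin (p n : ℕ) : Finset ℕ := (Finset.Icc 1 (p*n)).filter (fun k => ¬ p ∣ k)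

lemma mem_Ffin {p n k : ℕ} : k ∈ Ffin p n ↔ (1 ≤ k ∧ k ≤ p * n ∧ ¬ p ∣ k) := by
  simp only [Ffin, mem_filter, mem_Icc]
  tauto

lemma Ffin_sum {M : Type*} [AddCommMonoid M] (p n : ℕ) (hp : 0 < p) (f : ℕ → M) :
    ∑ k ∈ Ffin p n, f k = ∑ c ∈ range n, ∑ r ∈ Ico 1 p, f (c * p + r) := by
  rw [← Finset.sum_product']
  refine Finset.sum_nbij' (fun k => (k / p, k % p)) (fun cr => cr.1 * p + cr.2) ?_ ?_ ?_ ?_ ?_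
  · intro k hk
    rw [mem_Ffin] at hk
    obtain ⟨h1, h2, h3⟩ := hk
    have hmod : k % p ≠ 0 := fun h => h3 ((Nat.dvd_iff_mod_eq_zero).2 h)
    have hlt : k < p * n := by
      rcases Nat.lt_or_ge k (p * n) with h | h
      · exact h
      · exact absurd (Dvd.intro n rfl) (by rw [le_antisymm h2 h] at h3; exact h3)
    simp only [mem_product, mem_range, mem_Ico]
    refine ⟨?_, ?_, Nat.mod_lt k hp⟩
    · exact Nat.div_lt_of_lt_mul (by omega)
    · omega
  · intro cr hcr
    simp only [mem_product, mem_range, mem_Ico] at hcr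
    rw [mem_Ffin]
    obtain ⟨hc, hr1, hr2⟩ := hcr
    refine ⟨le_trans hr1 (Nat.le_add_left _ _), ?_, ?_⟩
    · have h1 : cr.1 + 1 ≤ n := hc
      have h2 : (cr.1 + 1) * p ≤ n * p := Nat.mul_le_mul h1 (le_refl p)
      refine Nat.le_of_lt ?_
      calc cr.1 * p + cr.2 < cr.1 * p + p := Nat.add_lt_add_left hr2 _
        _ = (cr.1 + 1) * p := by ring
        _ ≤ n * p := h2
        _ = p * n := mul_comm n p
    · intro hd
      have : p ∣ cr.2 := (Nat.dvd_add_right ⟨cr.1, mul_comm cr.1 p⟩).1 hd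
      have := Nat.le_of_dvd (by omega) this
      omega
  · intro k hk
    show k / p * p + k % p = k
    rw [mul_comm]
    exact Nat.div_add_mod k p
  · intro cr hcr
    simp only [mem_product, mem_range, mem_Ico] at hcr
    obtain ⟨hc, hr1, hr2⟩ := hcr
    have hdiv : (cr.1 * p + cr.2) / p = cr.1 := by
      rw [add_comm, Nat.add_mul_div_right _ _ hp, Nat.div_eq_of_lt hr2, zero_add]
    have hmod : (cr.1 * p + cr.2) % p = cr.2 := by
      rw [add_comm, Nat.add_mul_mod_self_right, Nat.mod_eq_of_lt hr2]
    show ((cr.1 * p + cr.2) / p, (cr.1 * p + cr.2) % p) = cr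
    rw [hdiv, hmod]
  · intro k hk
    show f k = f (k / p * p + k % p)
    congr 1
    rw [mul_comm]
    exact (Nat.div_add_mod k p).symm

lemma Pz_p {p : ℕ} (hp : p.Prime) (n t : ℕ) :
    (∑ k ∈ Ffin p n, ((k : ZMod p))⁻¹ ^ t) = (n : ZMod p) * Tz p p t := by
  rw [Ffin_sum p n hp.pos]
  have hterm : ∀ c ∈ range n, ∑ r ∈ Ico 1 p, (((c * p + r : ℕ) : ZMod p))⁻¹ ^ t
      = Tz p p t := by
    intro c _
    rw [Tz]
    refine Finset.sum_congr rfl ?_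
    intro r _
    congr 2
    push_cast [ZMod.natCast_self]
    ring
  rw [Finset.sum_congr rfl hterm, Finset.sum_const, card_range, nsmul_eq_mul]

lemma Pz_sq {p : ℕ} (hp : p.Prime) (n : ℕ) {t : ℕ} (ht1 : ¬ (p - 1) ∣ (t + 1)) :
    (∑ k ∈ Ffin p n, ((k : ZMod (p^2)))⁻¹ ^ t) = (n : ZMod (p^2)) * Tz (p^2) p t := by
  rw [Ffin_sum p n hp.pos]
  have hterm : ∀ c ∈ range n, ∑ r ∈ Ico 1 p, (((c * p + r : ℕ) : ZMod (p^2)))⁻¹ ^ t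
      = Tz (p^2) p t := by
    intro c _
    have hstep : ∀ r ∈ Ico 1 p, (((c * p + r : ℕ) : ZMod (p^2)))⁻¹ ^ t
        = ((r : ZMod (p^2)))⁻¹ ^ t
          - ((c : ZMod (p^2)) * (t : ZMod (p^2))) * (((r : ZMod (p^2)))⁻¹ ^ (t+1) * (p : ZMod (p^2))) := by
      intro r hr
      simp only [mem_Ico] at hr
      have hk : ¬ p ∣ r := fun hd => absurd (Nat.le_of_dvd (by omega) hd) (by omega)
      have hu := unit_of_not_dvd hp 2 hk
      have hcast : ((c * p + r : ℕ) : ZMod (p^2))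
          = (r : ZMod (p^2)) + (c : ZMod (p^2)) * (p : ZMod (p^2)) := by
        push_cast; ring
      rw [hcast, inv_add_pow _ _ _ pi_sq hu t]
      ring
    rw [Finset.sum_congr rfl hstep, Finset.sum_sub_distrib]
    have h2 : ∑ r ∈ Ico 1 p, ((c : ZMod (p^2)) * (t : ZMod (p^2))) * (((r : ZMod (p^2)))⁻¹ ^ (t+1) * (p : ZMod (p^2)))
        = ((c : ZMod (p^2)) * (t : ZMod (p^2))) * ((p : ZMod (p^2)) * Tz (p^2) p (t+1)) := by
      rw [Tz, Finset.mul_sum, Finset.mul_sum]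
      refine Finset.sum_congr rfl ?_
      intro r _; ring
    rw [h2, pi_Tz hp ht1, mul_zero, sub_zero]
    rfl
  rw [Finset.sum_congr rfl hterm, Finset.sum_const, card_range, nsmul_eq_mul]

def Ez (m p n s j : ℕ) : ZMod m := ∑ A ∈ (Ffin p n).powersetCard j, ∏ k ∈ A, ((k : ZMod m))⁻¹ ^ s

lemma Ez_zero (m p n s : ℕ) : Ez m p n s 0 = 1 := by
  rw [Ez, Finset.powersetCard_zero, Finset.sum_singleton, Finset.prod_empty]

lemma eval_esymm (m p n s j : ℕ) :
    MvPolynomial.eval (fun k : ↥(Ffin p n) => ((k : ℕ) : ZMod m)⁻¹ ^ s)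
      (MvPolynomial.esymm (↥(Ffin p n)) (ZMod m) j) = Ez m p n s j := by
  classical
  rw [MvPolynomial.esymm, map_sum, Ez]
  have hF : (Ffin p n).powersetCard j
      = ((Finset.univ : Finset ↥(Ffin p n)).powersetCard j).map
          (Finset.mapEmbedding (Function.Embedding.subtype _)).toEmbedding := by
    conv_lhs => rw [← Finset.attach_map_val (s := Ffin p n), ← Finset.univ_eq_attach]
    rw [Finset.powersetCard_map]
  rw [hF, Finset.sum_map]
  refine Finset.sum_congr rfl ?_
  intro A _
  rw [map_prod, RelEmbedding.coe_toEmbedding, Finset.mapEmbedding_apply, Finset.prod_map]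
  refine Finset.prod_congr rfl ?_
  intro a _
  rw [MvPolynomial.eval_X]
  rfl

lemma eval_psum (m p n s d : ℕ) :
    MvPolynomial.eval (fun k : ↥(Ffin p n) => ((k : ℕ) : ZMod m)⁻¹ ^ s)
      (MvPolynomial.psum (↥(Ffin p n)) (ZMod m) d) = ∑ k ∈ Ffin p n, ((k : ZMod m))⁻¹ ^ (s * d) := by
  classical
  rw [MvPolynomial.psum, map_sum]
  rw [Finset.univ_eq_attach, ← Finset.sum_attach (Ffin p n) (fun k => ((k : ZMod m))⁻¹ ^ (s * d))]
  refine Finset.sum_congr rfl ?_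
  intro a _
  rw [map_pow, MvPolynomial.eval_X, ← pow_mul]

lemma newton_eval (m p n s j : ℕ) :
    (j : ZMod m) * Ez m p n s j = (-1)^(j+1) *
      ∑ a ∈ (Finset.HasAntidiagonal.antidiagonal j).filter (fun a => a.1 < j),
        (-1)^a.1 * Ez m p n s a.1 * (∑ k ∈ Ffin p n, ((k : ZMod m))⁻¹ ^ (s * a.2)) := by
  classical
  have h := MvPolynomial.mul_esymm_eq_sum (↥(Ffin p n)) (ZMod m) j
  have h2 := congrArg (MvPolynomial.eval (fun k : ↥(Ffin p n) => ((k : ℕ) : ZMod m)⁻¹ ^ s)) h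
  rw [map_mul, map_mul, map_natCast, map_pow, map_sum] at h2
  rw [eval_esymm] at h2
  rw [h2]
  congr 1
  · rw [map_neg, map_one]
  refine Finset.sum_congr rfl ?_
  intro a _
  rw [map_mul, map_mul, map_pow, map_neg, map_one, eval_esymm, eval_psum]

lemma unit_mul_eq_zero {m : ℕ} {u x : ZMod m} (hu : IsUnit u) (h : u * x = 0) : x = 0 := by
  calc x = (u⁻¹ * u) * x := by rw [ZMod.inv_mul_of_unit _ hu, one_mul]
    _ = u⁻¹ * (u * x) := by ring
    _ = 0 := by rw [h, mul_zero]

lemma Ez_p_zero {p : ℕ} (hp : p.Prime) {s l : ℕ} (hpl : l + 2 ≤ p)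
    (hdiv : ∀ k, 1 ≤ k → k ≤ l → ¬ (p - 1) ∣ (k * s)) (n : ℕ) :
    ∀ j, 1 ≤ j → j ≤ l → Ez p p n s j = 0 := by
  intro j hj1 hjl
  have h := newton_eval p p n s j
  have hz : ∀ a ∈ (Finset.HasAntidiagonal.antidiagonal j).filter (fun a => a.1 < j),
      (-1 : ZMod p)^a.1 * Ez p p n s a.1 * (∑ k ∈ Ffin p n, ((k : ZMod p))⁻¹ ^ (s * a.2)) = 0 := by
    intro a ha
    simp only [mem_filter, Finset.HasAntidiagonal.mem_antidiagonal] at ha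
    have ha2 : 1 ≤ a.2 ∧ a.2 ≤ l := by omega
    rw [Pz_p hp n (s * a.2)]
    have hT : Tz p p (s * a.2) = 0 := by
      refine Tz_p_eq_zero hp ?_
      rw [mul_comm]
      exact hdiv a.2 ha2.1 ha2.2
    rw [hT, mul_zero, mul_zero]
  rw [Finset.sum_eq_zero hz, mul_zero] at h
  have hpj : ¬ p ∣ j := by
    intro hd
    have := Nat.le_of_dvd (by omega) hd
    omega
  exact unit_mul_eq_zero (unit_of_not_dvd' hp hpj) h

lemma cast_Ez {p : ℕ} (hp : p.Prime) (n s j : ℕ) :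
    (ZMod.castHom (dvd_pow_self p two_ne_zero) (ZMod p)) (Ez (p^2) p n s j) = Ez p p n s j := by
  rw [Ez, Ez, map_sum]
  refine Finset.sum_congr rfl ?_
  intro A hA
  rw [map_prod]
  refine Finset.prod_congr rfl ?_
  intro k hk
  have hkF : k ∈ Ffin p n := (Finset.mem_powersetCard.1 hA).1 hk
  have hknd : ¬ p ∣ k := (mem_Ffin.1 hkF).2.2
  rw [map_pow, casthom_inv hp hknd]

lemma Ez_sq_factor {p : ℕ} (hp : p.Prime) {s l : ℕ} (hpl : l + 2 ≤ p)
    (hdiv : ∀ k, 1 ≤ k → k ≤ l → ¬ (p - 1) ∣ (k * s)) (n : ℕ) {j : ℕ} (hj1 : 1 ≤ j)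
    (hjl : j ≤ l) : ∃ y, Ez (p^2) p n s j = (p : ZMod (p^2)) * y :=
  exists_of_cast_eq_zero hp _
    (by rw [cast_Ez hp]; exact Ez_p_zero hp hpl hdiv n j hj1 hjl)

lemma Ez_sq_zero {p : ℕ} (hp : p.Prime) (hodd : Odd p) {s l : ℕ} (hl : 1 ≤ l)
    (hpl : l + 2 ≤ p)
    (hdiv : ∀ k, 1 ≤ k → k ≤ l → ¬ (p - 1) ∣ (k * s) ∧ ¬ (p - 1) ∣ (k * s + 1))
    (hlodd : Odd (l * s)) (n : ℕ) :
    Ez (p^2) p n s l = 0 := by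
  have h := newton_eval (p^2) p n s l
  have hz : ∀ a ∈ (Finset.HasAntidiagonal.antidiagonal l).filter (fun a => a.1 < l),
      (-1 : ZMod (p^2))^a.1 * Ez (p^2) p n s a.1
        * (∑ k ∈ Ffin p n, ((k : ZMod (p^2)))⁻¹ ^ (s * a.2)) = 0 := by
    intro a ha
    simp only [mem_filter, Finset.HasAntidiagonal.mem_antidiagonal] at ha
    have ha2 : 1 ≤ a.2 ∧ a.2 ≤ l := by omega
    have hsa2 : ¬ (p - 1) ∣ (s * a.2) := by
      rw [mul_comm]; exact (hdiv a.2 ha2.1 ha2.2).1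
    have hsa21 : ¬ (p - 1) ∣ (s * a.2 + 1) := by
      rw [mul_comm]; exact (hdiv a.2 ha2.1 ha2.2).2
    rw [Pz_sq hp n hsa21]
    rcases Nat.eq_zero_or_pos a.1 with h0 | h1
    · -- a.1 = 0 : use the pairing result
      have ha2l : a.2 = l := by omega
      have hT : Tz (p^2) p (s * a.2) = 0 := by
        refine Tz_pairing hp hodd ?_ hsa2 hsa21
        rw [ha2l, mul_comm]; exact hlodd
      rw [hT, mul_zero, mul_zero]
    · obtain ⟨y, hy⟩ := Ez_sq_factor hp hpl (fun k hk1 hk2 => (hdiv k hk1 hk2).1) n h1 (by omega)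
      obtain ⟨z, hz⟩ := Tz_factor hp hsa2
      rw [hy, hz]
      have hπ : ((p : ZMod (p^2)))^2 = 0 := pi_sq
      linear_combination ((-1 : ZMod (p^2))^a.1 * y * (n : ZMod (p^2)) * z) * hπ
  rw [Finset.sum_eq_zero hz, mul_zero] at h
  have hpl' : ¬ p ∣ l := by
    intro hd
    have := Nat.le_of_dvd (by omega) hd
    omega
  exact unit_mul_eq_zero (unit_of_not_dvd hp 2 hpl') h


open Classical in
lemma tuple_sum (p s m L : ℕ) :
    (∑ k ∈ Finset.univ.filter
      (fun k : Fin L → Fin (m + 1) =>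
        StrictMono k ∧ ∀ i, 1 ≤ (k i : ℕ) ∧ ¬ p ∣ (k i : ℕ)),
      ∏ i, 1 / (((k i : ℕ) : ℚ) ^ s))
    = ∑ A ∈ ((Finset.Icc 1 m).filter (fun k => ¬ p ∣ k)).powersetCard L,
        ∏ k ∈ A, 1 / ((k : ℚ))^s := by
  classical
  refine Finset.sum_bij (fun k _ => Finset.image (fun i => ((k i : ℕ))) Finset.univ) ?_ ?_ ?_ ?_
  · -- membership
    intro k hk
    simp only [mem_filter, mem_univ, true_and] at hk
    obtain ⟨hmono, hcond⟩ := hk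
    have hinj : Function.Injective (fun i => ((k i : ℕ))) := by
      intro a b hab
      exact (hmono.injective) (Fin.val_injective hab)
    rw [Finset.mem_powersetCard]
    constructor
    · intro x hx
      simp only [Finset.mem_image, mem_univ, true_and] at hx
      obtain ⟨i, rfl⟩ := hx
      rw [mem_filter, mem_Icc]
      exact ⟨⟨(hcond i).1, Nat.lt_succ_iff.1 (k i).isLt⟩, (hcond i).2⟩
    · rw [Finset.card_image_of_injective _ hinj, Finset.card_univ, Fintype.card_fin]
  · -- injectivity
    intro k hk k' hk' heq
    simp only [mem_filter, mem_univ, true_and] at hk hk'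
    have hmono : StrictMono (fun i => ((k i : ℕ))) := fun a b hab => hk.1 hab
    have hmono' : StrictMono (fun i => ((k' i : ℕ))) := fun a b hab => hk'.1 hab
    have hinjk : Function.Injective (fun i => ((k i : ℕ))) := hmono.injective
    have hinjk' : Function.Injective (fun i => ((k' i : ℕ))) := hmono'.injective
    have hcard : (Finset.image (fun i => ((k i : ℕ))) Finset.univ).card = L := by
      rw [Finset.card_image_of_injective _ hinjk, Finset.card_univ, Fintype.card_fin]
    have hcard' : (Finset.image (fun i => ((k' i : ℕ))) Finset.univ).card = L := by
      rw [Finset.card_image_of_injective _ hinjk', Finset.card_univ, Fintype.card_fin]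
    have h1 := Finset.orderEmbOfFin_unique hcard
      (fun i => Finset.mem_image_of_mem _ (mem_univ i)) hmono
    have h2 := Finset.orderEmbOfFin_unique hcard'
      (fun i => Finset.mem_image_of_mem _ (mem_univ i)) hmono'
    have hgen : ∀ (A B : Finset ℕ) (hA : A.card = L) (hB : B.card = L), A = B →
        ∀ i, A.orderEmbOfFin hA i = B.orderEmbOfFin hB i := by
      rintro A B hA hB rfl i; rfl
    funext i
    apply Fin.val_injective
    show ((k i : ℕ)) = ((k' i : ℕ))
    rw [congrFun h1 i, congrFun h2 i]
    exact hgen _ _ hcard hcard' heq i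
  · -- surjectivity
    intro B hB
    rw [Finset.mem_powersetCard] at hB
    obtain ⟨hBF, hBcard⟩ := hB
    have hmem : ∀ i : Fin L, B.orderEmbOfFin hBcard i ∈ B := fun i =>
      Finset.orderEmbOfFin_mem B hBcard i
    have hbound : ∀ i : Fin L, B.orderEmbOfFin hBcard i < m + 1 := by
      intro i
      have := hBF (hmem i)
      rw [mem_filter, mem_Icc] at this
      omega
    refine ⟨fun i => ⟨B.orderEmbOfFin hBcard i, hbound i⟩, ?_, ?_⟩
    · simp only [mem_filter, mem_univ, true_and]
      constructor
      · intro a b hab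
        have : B.orderEmbOfFin hBcard a < B.orderEmbOfFin hBcard b :=
          (B.orderEmbOfFin hBcard).strictMono hab
        exact this
      · intro i
        have := hBF (hmem i)
        rw [mem_filter, mem_Icc] at this
        exact ⟨this.1.1, this.2⟩
    · have hinj : Function.Injective (fun i : Fin L => B.orderEmbOfFin hBcard i) :=
        (B.orderEmbOfFin hBcard).injective
      refine Finset.eq_of_subset_of_card_le ?_ ?_
      · intro x hx
        simp only [Finset.mem_image, mem_univ, true_and] at hx
        obtain ⟨i, rfl⟩ := hx
        exact hmem i
      · rw [Finset.card_image_of_injective _ hinj, Finset.card_univ, Fintype.card_fin, hBcard]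
  · -- values
    intro k hk
    simp only [mem_filter, mem_univ, true_and] at hk
    have hinj : ∀ x ∈ (Finset.univ : Finset (Fin L)), ∀ y ∈ Finset.univ,
        ((k x : ℕ)) = ((k y : ℕ)) → x = y :=
      fun a _ b _ hab => (hk.1.injective) (Fin.val_injective hab)
    show ∏ i, 1 / (((k i : ℕ) : ℚ) ^ s)
      = ∏ x ∈ Finset.image (fun i => ((k i : ℕ))) Finset.univ, 1 / ((x:ℚ))^s
    rw [Finset.prod_image hinj]

def aN (p n s l : ℕ) : ℕ := ∑ A ∈ (Ffin p n).powersetCard l, ∏ k ∈ (Ffin p n) \ A, k^s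
def bD (p n s : ℕ) : ℕ := ∏ k ∈ Ffin p n, k^s

lemma bD_pos (p n s : ℕ) : 0 < bD p n s := by
  rw [bD]
  refine Finset.prod_pos ?_
  intro k hk
  have := (mem_Ffin.1 hk).1
  positivity

lemma bD_not_dvd {p : ℕ} (hp : p.Prime) (n s : ℕ) : ¬ p ∣ bD p n s := by
  rw [bD]
  intro hd
  have hco : Nat.Coprime p (∏ k ∈ Ffin p n, k^s) := by
    refine Nat.Coprime.prod_right ?_
    intro k hk
    exact ((hp.coprime_iff_not_dvd.2 (mem_Ffin.1 hk).2.2).pow_right s)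
  have h1 := Nat.Coprime.eq_one_of_dvd hco hd
  exact hp.one_lt.ne' h1

lemma sum_div_eq (p n s l : ℕ) :
    (∑ A ∈ (Ffin p n).powersetCard l, ∏ k ∈ A, 1 / ((k : ℚ))^s)
      = (aN p n s l : ℚ) / (bD p n s : ℚ) := by
  rw [aN, bD]
  push_cast
  rw [Finset.sum_div]
  refine Finset.sum_congr rfl ?_
  intro A hA
  have hAF : A ⊆ Ffin p n := (Finset.mem_powersetCard.1 hA).1
  have hne : ∀ k ∈ Ffin p n, ((k:ℚ))^s ≠ 0 := by
    intro k hk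
    have h1 := (mem_Ffin.1 hk).1
    positivity
  have hprodA_ne : (∏ k ∈ A, ((k:ℚ))^s) ≠ 0 :=
    Finset.prod_ne_zero_iff.2 (fun k hk => hne k (hAF hk))
  have hF_ne : (∏ k ∈ Ffin p n, ((k:ℚ))^s) ≠ 0 := Finset.prod_ne_zero_iff.2 hne
  have hinv : ∏ k ∈ A, (1/((k:ℚ))^s) = (∏ k ∈ A, ((k:ℚ))^s)⁻¹ := by
    rw [← Finset.prod_inv_distrib]
    exact Finset.prod_congr rfl (fun k _ => one_div _)
  have hsdiff : (∏ k ∈ (Ffin p n)\A, ((k:ℚ))^s) * (∏ k ∈ A, ((k:ℚ))^s)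
      = ∏ k ∈ Ffin p n, ((k:ℚ))^s := Finset.prod_sdiff hAF
  rw [hinv, eq_div_iff hF_ne, ← hsdiff, mul_comm ((∏ k ∈ (Ffin p n)\A, ((k:ℚ))^s)) _,
    ← mul_assoc, inv_mul_cancel₀ hprodA_ne, one_mul]

lemma aN_cast (m p n s l : ℕ) (hu : ∀ k ∈ Ffin p n, IsUnit ((k : ZMod m))) :
    ((aN p n s l : ℕ) : ZMod m) = ((bD p n s : ℕ) : ZMod m) * Ez m p n s l := by
  rw [aN, bD, Ez]
  push_cast
  rw [Finset.mul_sum]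
  refine Finset.sum_congr rfl ?_
  intro A hA
  have hAF : A ⊆ Ffin p n := (Finset.mem_powersetCard.1 hA).1
  have key : ∀ k ∈ A, ((k:ZMod m))^s * (((k:ZMod m))⁻¹)^s = 1 := by
    intro k hk
    rw [← mul_pow, mul_comm, ZMod.inv_mul_of_unit _ (hu k (hAF hk)), one_pow]
  calc ∏ k ∈ (Ffin p n)\A, ((k:ZMod m))^s
      = (∏ k ∈ (Ffin p n)\A, ((k:ZMod m))^s)
          * ∏ k ∈ A, (((k:ZMod m))^s * (((k:ZMod m))⁻¹)^s) := by
        rw [Finset.prod_congr rfl key, Finset.prod_const_one, mul_one]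
    _ = ((∏ k ∈ (Ffin p n)\A, ((k:ZMod m))^s) * ∏ k ∈ A, ((k:ZMod m))^s)
          * ∏ k ∈ A, (((k:ZMod m))⁻¹)^s := by
        rw [Finset.prod_mul_distrib]; ring
    _ = (∏ k ∈ Ffin p n, ((k:ZMod m))^s) * ∏ k ∈ A, (((k:ZMod m))⁻¹)^s := by
        rw [Finset.prod_sdiff hAF]




open Classical in
/-- Multiple harmonic sum `H(s₁,…,s_l; n) = ∑_{1 ≤ k₁ < ⋯ < k_l ≤ n} k₁^{-s₁} ⋯ k_l^{-s_l}`,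
encoded via strictly increasing tuples of indices in `{1,…,n}` (an empty sum is `0`,
and `mhs [] n = 1`). -/
noncomputable def mhs (s : List ℕ) (n : ℕ) : ℚ :=
  ∑ k ∈ Finset.univ.filter
      (fun k : Fin s.length → Fin (n + 1) =>
        StrictMono k ∧ ∀ i, 1 ≤ (k i : ℕ)),
    ∏ i, 1 / (((k i : ℕ) : ℚ) ^ s.get i)

open Classical in
/-- `p`-restricted multiple harmonic sum `H*(s; n)`: same sum with all indices
not divisible by `p`. -/
noncomputable def mhsStar (p : ℕ) (s : List ℕ) (n : ℕ) : ℚ :=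
  ∑ k ∈ Finset.univ.filter
      (fun k : Fin s.length → Fin (n + 1) =>
        StrictMono k ∧ ∀ i, 1 ≤ (k i : ℕ) ∧ ¬ p ∣ (k i : ℕ)),
    ∏ i, 1 / (((k i : ℕ) : ℚ) ^ s.get i)

lemma mhsStar_eq (p s l n : ℕ) :
    mhsStar p (List.replicate l s) (p * n)
      = ∑ A ∈ (Ffin p n).powersetCard l, ∏ k ∈ A, 1 / ((k : ℚ))^s := by
  rw [mhsStar]
  have hget : ∀ (k : Fin (List.replicate l s).length → Fin (p*n+1)),
      (∏ i, 1 / (((k i : ℕ) : ℚ) ^ (List.replicate l s).get i))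
        = ∏ i, 1 / (((k i : ℕ) : ℚ) ^ s) := by
    intro k
    refine Finset.prod_congr rfl ?_
    intro i _
    rw [List.get_eq_getElem, List.getElem_replicate]
  rw [Finset.sum_congr rfl (fun k _ => hget k), tuple_sum p s (p*n) _]
  rw [List.length_replicate]
  rfl

/-- If `p` is an odd prime, `p ≥ l+2` and `p-1` divides none of `ks`, `ks+1` for
`k = 1,…,l`, then for every `n ≥ 1`, `v_p(H*({s}^l; pn)) ≥ 1` if `ls` is even and
`≥ 2` if `ls` is odd (with `v_p(0) = ∞`). -/
theorem stmt7 (s l p : ℕ) (hs : 0 < s) (hl : 0 < l) (hp : p.Prime) (hodd : Odd p)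
    (hpl : l + 2 ≤ p)
    (hdiv : ∀ k, 1 ≤ k → k ≤ l → ¬ (p - 1) ∣ (k * s) ∧ ¬ (p - 1) ∣ (k * s + 1))
    (n : ℕ) (hn : 0 < n) :
    (Even (l * s) →
      (mhsStar p (List.replicate l s) (p * n) = 0 ∨
        1 ≤ padicValRat p (mhsStar p (List.replicate l s) (p * n)))) ∧
    (Odd (l * s) →
      (mhsStar p (List.replicate l s) (p * n) = 0 ∨
        2 ≤ padicValRat p (mhsStar p (List.replicate l s) (p * n)))) := by
  haveI : Fact p.Prime := ⟨hp⟩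
  have hmeq : mhsStar p (List.replicate l s) (p * n) = (aN p n s l : ℚ) / (bD p n s : ℚ) := by
    rw [mhsStar_eq, sum_div_eq]
  have hbne : (bD p n s : ℚ) ≠ 0 := Nat.cast_ne_zero.2 (bD_pos p n s).ne'
  have main : ∀ e : ℕ, p^e ∣ aN p n s l →
      (mhsStar p (List.replicate l s) (p * n) = 0 ∨
        (e : ℤ) ≤ padicValRat p (mhsStar p (List.replicate l s) (p * n))) := by
    intro e hdvd
    by_cases h0 : mhsStar p (List.replicate l s) (p * n) = 0
    · exact Or.inl h0
    right
    have haN : aN p n s l ≠ 0 := by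
      intro h
      apply h0
      rw [hmeq, h, Nat.cast_zero, zero_div]
    have hane : (aN p n s l : ℚ) ≠ 0 := Nat.cast_ne_zero.2 haN
    rw [hmeq, padicValRat.div hane hbne, padicValRat.of_nat, padicValRat.of_nat,
      padicValNat.eq_zero_of_not_dvd (bD_not_dvd hp n s), Nat.cast_zero, sub_zero]
    exact_mod_cast (padicValNat_dvd_iff_le haN).1 hdvd
  constructor
  · intro _
    have hE : Ez p p n s l = 0 :=
      Ez_p_zero hp hpl (fun k h1 h2 => (hdiv k h1 h2).1) n l hl (le_refl l)
    have hcast : ((aN p n s l : ℕ) : ZMod p) = 0 := by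
      rw [aN_cast p p n s l (fun k hk => unit_of_not_dvd' hp (mem_Ffin.1 hk).2.2), hE, mul_zero]
    have h1 := (ZMod.natCast_eq_zero_iff _ _).1 hcast
    have := main 1 (by rw [pow_one]; exact h1)
    simpa using this
  · intro hoddls
    have hE : Ez (p^2) p n s l = 0 :=
      Ez_sq_zero hp hodd hl hpl hdiv hoddls n
    have hcast : ((aN p n s l : ℕ) : ZMod (p^2)) = 0 := by
      rw [aN_cast (p^2) p n s l (fun k hk => unit_of_not_dvd hp 2 (mem_Ffin.1 hk).2.2), hE,
        mul_zero]
    have h2 := (ZMod.natCast_eq_zero_iff _ _).1 hcast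
    have := main 2 h2
    simpa using this
end

section
/- Let s be a positive integer. For every positive integer n, if t ≥ 1 is the integer with 2^{t-1} ≤ n < 2^t, then v_2(H(s;n)) = -(t-1)s. In particular, the numerator of H(s;n) in lowest terms is odd for every n ≥ 1, so J(s|2) = {0}. -/
lemma mhs_single (s n : ℕ) :
    mhs [s] n = ∑ k ∈ Finset.Icc 1 n, 1 / ((k : ℚ) ^ s) := by
  classical
  unfold mhs
  have hL : [s].length = 1 := rfl
  refine Finset.sum_nbij' (fun k => ((k ⟨0, Nat.one_pos⟩ : Fin (n+1)) : ℕ))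
    (fun m => fun _ => (⟨min m n, by omega⟩ : Fin (n+1))) ?_ ?_ ?_ ?_ ?_
  · intro k hk
    simp only [Finset.mem_filter, Finset.mem_univ, true_and] at hk
    have := (k ⟨0, Nat.one_pos⟩).isLt
    simp only [Finset.mem_Icc]
    exact ⟨hk.2 _, by omega⟩
  · intro m hm
    simp only [Finset.mem_Icc] at hm
    simp only [Finset.mem_filter, Finset.mem_univ, true_and]
    constructor
    · intro a b hab
      have ha : (a:ℕ) < 1 := hL ▸ a.isLt
      have hb : (b:ℕ) < 1 := hL ▸ b.isLt
      rw [Fin.lt_def] at hab; omega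
    · intro i; simp; omega
  · intro k hk
    simp only [Finset.mem_filter, Finset.mem_univ, true_and] at hk
    funext i
    have hi : i = ⟨0, Nat.one_pos⟩ := by
      have h0 : (i:ℕ) < 1 := hL ▸ i.isLt
      exact Fin.ext (by omega)
    subst hi
    have hkn : (k ⟨0, Nat.one_pos⟩ : ℕ) ≤ n := by
      have := (k ⟨0, Nat.one_pos⟩).isLt; omega
    exact Fin.ext (by simp [Nat.min_eq_left hkn]; exact hkn)
  · intro m hm
    simp only [Finset.mem_Icc] at hm
    simp [Nat.min_eq_left hm.2]
  · intro k hk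
    have : ∀ f : Fin [s].length → ℚ, ∏ i, f i = f ⟨0, Nat.one_pos⟩ := fun f =>
      Fin.prod_univ_one f
    rw [this]; rfl

lemma key (s : ℕ) (hs : 0 < s) (n t : ℕ) (hn : 0 < n) (ht : 1 ≤ t)
    (h1 : 2 ^ (t - 1) ≤ n) (h2 : n < 2 ^ t) :
    mhs [s] n ≠ 0 ∧ padicValRat 2 (mhs [s] n) = -(((t : ℤ) - 1) * s) := by
  haveI : Fact (Nat.Prime 2) := ⟨Nat.prime_two⟩
  set F : ℕ → ℚ := fun k => 1 / ((max k 1 : ℕ) : ℚ) ^ s with hFdef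
  have hFpos : ∀ k, 0 < F k := by
    intro k
    apply div_pos one_pos
    apply pow_pos
    exact_mod_cast Nat.lt_of_lt_of_le Nat.zero_lt_one (le_max_right k 1)
  have hEq : mhs [s] n = ∑ k ∈ Finset.Icc 1 n, F k := by
    rw [mhs_single]
    refine Finset.sum_congr rfl fun k hk => ?_
    simp only [Finset.mem_Icc] at hk
    rw [hFdef]
    simp [Nat.max_eq_left hk.1]
  have valF : ∀ k, 1 ≤ k → padicValRat 2 (F k) = -((s : ℤ) * padicValNat 2 k) := by
    intro k hk
    have hk0 : ((k : ℚ)) ≠ 0 := by positivity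
    rw [hFdef]
    simp only [Nat.max_eq_left hk, one_div]
    rw [padicValRat.inv, padicValRat.pow (k : ℚ), ← padicValRat_of_nat]
  set m := 2 ^ (t - 1) with hm
  have hm1 : 1 ≤ m := Nat.one_le_two_pow
  have hmem : m ∈ Finset.Icc 1 n := Finset.mem_Icc.mpr ⟨hm1, h1⟩
  have valFm : padicValRat 2 (F m) = -(((t : ℤ) - 1) * s) := by
    rw [valF m hm1, hm, padicValNat.prime_pow]
    have : ((t - 1 : ℕ) : ℤ) = (t : ℤ) - 1 := by omega
    rw [this]; ring
  have hother : ∀ k ∈ (Finset.Icc 1 n).erase m,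
      padicValRat 2 (F m) < padicValRat 2 (F k) := by
    intro k hk
    obtain ⟨hkm, hk'⟩ := Finset.mem_erase.mp hk
    obtain ⟨hk1, hkn⟩ := Finset.mem_Icc.mp hk'
    have hv : padicValNat 2 k < t - 1 := by
      by_contra hcon
      push_neg at hcon
      have hdvd : 2 ^ (t - 1) ∣ k :=
        dvd_trans (pow_dvd_pow 2 hcon) pow_padicValNat_dvd
      obtain ⟨c, hc⟩ := hdvd
      have h2t : 2 ^ t = 2 * 2 ^ (t - 1) := by
        rw [← pow_succ']
        congr 1; omega
      have : c = 1 := by nlinarith [Nat.one_le_two_pow (n := t - 1)]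
      exact hkm (by rw [hc, this, mul_one])
    rw [valF k hk1, valFm]
    have hvz : (padicValNat 2 k : ℤ) < (t : ℤ) - 1 := by omega
    have hsz : (0 : ℤ) < s := by exact_mod_cast hs
    nlinarith
  rw [hEq, ← Finset.add_sum_erase _ F hmem]
  rcases Finset.eq_empty_or_nonempty ((Finset.Icc 1 n).erase m) with he | he
  · rw [he, Finset.sum_empty, add_zero]
    exact ⟨(hFpos m).ne', valFm⟩
  · have hRpos : 0 < ∑ k ∈ (Finset.Icc 1 n).erase m, F k :=
      Finset.sum_pos (fun i _ => hFpos i) he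
    have hlt : padicValRat 2 (F m) <
        padicValRat 2 (∑ k ∈ (Finset.Icc 1 n).erase m, F k) :=
      padicValRat.lt_sum_of_lt he hother hFpos
    have hne : F m + ∑ k ∈ (Finset.Icc 1 n).erase m, F k ≠ 0 :=
      (add_pos (hFpos m) hRpos).ne'
    refine ⟨hne, ?_⟩
    rw [padicValRat.add_eq_of_lt hne (hFpos m).ne' hRpos.ne' hlt, valFm]

/-- For `2^{t-1} ≤ n < 2^t` one has `v_2(H(s;n)) = -(t-1)s`; in particular the
numerator of `H(s;n)` is odd for all `n ≥ 1`, i.e. `J(s|2) = {0}`. -/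
theorem stmt10 (s : ℕ) (hs : 0 < s) :
    (∀ n t : ℕ, 0 < n → 1 ≤ t → 2 ^ (t - 1) ≤ n → n < 2 ^ t →
      mhs [s] n ≠ 0 ∧ padicValRat 2 (mhs [s] n) = -(((t : ℤ) - 1) * s)) ∧
    {n : ℕ | (2 : ℤ) ∣ (mhs [s] n).num} = {0} := by
  haveI : Fact (Nat.Prime 2) := ⟨Nat.prime_two⟩
  refine ⟨fun n t hn ht h1 h2 => key s hs n t hn ht h1 h2, ?_⟩
  ext n
  simp only [Set.mem_setOf_eq, Set.mem_singleton_iff]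
  constructor
  · intro hdvd
    by_contra hne
    have hn : 0 < n := Nat.pos_of_ne_zero hne
    set t := Nat.log 2 n + 1 with htdef
    have h1 : 2 ^ (t - 1) ≤ n := by
      rw [htdef, Nat.add_sub_cancel]; exact Nat.pow_log_le_self 2 hn.ne'
    have h2 : n < 2 ^ t := Nat.lt_pow_succ_log_self one_lt_two n
    obtain ⟨hq0, hval⟩ := key s hs n t hn (Nat.le_add_left 1 _) h1 h2
    set q := mhs [s] n with hq
    -- valuation is nonpositive
    have hnp : padicValRat 2 q ≤ 0 := by
      rw [hval]
      have h0 : (0 : ℤ) ≤ (t : ℤ) - 1 := by omega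
      have h3 : (0 : ℤ) ≤ ((t : ℤ) - 1) * s := mul_nonneg h0 (Int.ofNat_nonneg s)
      linarith
    -- but 2 ∣ num forces positive valuation
    have hnum : q.num ≠ 0 := Rat.num_ne_zero.mpr hq0
    have hdvdn : 2 ∣ q.num.natAbs := by
      rwa [← Int.natAbs_dvd_natAbs] at hdvd
    have hden : ¬ (2 : ℕ) ∣ q.den := by
      intro hd
      have := Nat.Coprime.eq_one_of_dvd (Nat.Coprime.coprime_dvd_left hdvdn q.reduced) hd
      omega
    have hpos : 1 ≤ padicValInt 2 q.num := by
      unfold padicValInt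
      exact one_le_padicValNat_of_dvd (Int.natAbs_ne_zero.mpr hnum) hdvdn
    rw [padicValRat_def, padicValNat.eq_zero_of_not_dvd hden] at hnp
    omega
  · intro h
    subst h
    have h0 : mhs [s] 0 = 0 := by
      rw [mhs_single]
      have : Finset.Icc 1 0 = (∅ : Finset ℕ) := rfl
      rw [this, Finset.sum_empty]
    rw [h0]
    simp
end
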